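/- Let μ be a probability measure on ℝ with compact and infinite support, and let (p_n) be the orthonormal polynomials for μ. Then for every x ∈ ℝ: if the series ∑_{n=0}^∞ p_n(x)² diverges then μ({x}) = 0, and if it converges then μ({x}) = (∑_{n=0}^∞ p_n(x)²)^{-1}. -/

import Mathlib

open MeasureTheory Polynomial


lemma aux_expand (p : ℕ → Polynomial ℝ)
    (hdeg : ∀ n, (p n).natDegree = n)
    (hlead : ∀ n, 0 < (p n).leadingCoeff) :
    ∀ n (q : Polynomial ℝ), q.natDegree ≤ n →
      ∃ c : ℕ → ℝ, q = ∑ k ∈ Finset.range (n+1), Polynomial.C (c k) * p k := by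
  intro n
  induction n with
  | zero =>
    intro q hq
    have hp0 : p 0 = Polynomial.C ((p 0).coeff 0) := eq_C_of_natDegree_le_zero (le_of_eq (hdeg 0))
    have ha : (p 0).coeff 0 ≠ 0 := by
      have := hlead 0
      rw [leadingCoeff, hdeg 0] at this
      exact ne_of_gt this
    refine ⟨fun _ => q.coeff 0 / (p 0).coeff 0, ?_⟩
    rw [Finset.sum_range_one, hp0]
    simp only [Polynomial.coeff_C_zero]
    rw [← Polynomial.C_mul, div_mul_cancel₀ _ ha]
    exact eq_C_of_natDegree_le_zero hq
  | succ n ih =>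
    intro q hq
    set b := (p (n+1)).coeff (n+1) with hb
    have hbl : b = (p (n+1)).leadingCoeff := by rw [leadingCoeff, hdeg (n+1)]
    have hbne : b ≠ 0 := by rw [hbl]; exact ne_of_gt (hlead (n+1))
    set a := q.coeff (n+1) with hha
    set r := q - Polynomial.C (a / b) * p (n+1) with hr
    have hrdeg : r.natDegree ≤ n := by
      rw [natDegree_le_iff_coeff_eq_zero]
      intro N hN
      rw [hr, Polynomial.coeff_sub, Polynomial.coeff_C_mul]
      rcases eq_or_lt_of_le (Nat.succ_le_of_lt hN) with h | h
      · rw [← h, ← hha, ← hb, div_mul_cancel₀ _ hbne, sub_self]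
      · have h1 : q.coeff N = 0 := coeff_eq_zero_of_natDegree_lt (lt_of_le_of_lt hq h)
        have h2 : (p (n+1)).coeff N = 0 := coeff_eq_zero_of_natDegree_lt (by rw [hdeg]; exact h)
        rw [h1, h2, mul_zero, sub_zero]
    obtain ⟨c', hc'⟩ := ih r hrdeg
    refine ⟨fun k => if k = n+1 then a / b else c' k, ?_⟩
    rw [Finset.sum_range_succ]
    simp only []
    rw [if_pos trivial]
    have heq : ∑ k ∈ Finset.range (n+1), Polynomial.C (if k = n+1 then a/b else c' k) * p k
        = ∑ k ∈ Finset.range (n+1), Polynomial.C (c' k) * p k := by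
      apply Finset.sum_congr rfl
      intro k hk
      rw [if_neg (by simp at hk; omega)]
    rw [heq, ← hc', hr]
    ring

lemma aux_int_mul (μ : Measure ℝ) [IsProbabilityMeasure μ] (p : ℕ → Polynomial ℝ)
    (horth : ∀ n m, ∫ x, (p n).eval x * (p m).eval x ∂μ = if n = m then 1 else 0) :
    ∀ i j, Integrable (fun t => (p i).eval t * (p j).eval t) μ := by
  have hsq : ∀ n, Integrable (fun t => (p n).eval t * (p n).eval t) μ := by
    intro n
    by_contra h
    have := integral_undef h
    rw [horth n n, if_pos rfl] at this
    norm_num at this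
  intro i j
  refine Integrable.mono' (((hsq i).add (hsq j)).div_const 2)
    (((p i).continuous_aeval.mul (p j).continuous_aeval).aestronglyMeasurable) ?_
  filter_upwards with t
  rw [norm_mul, Real.norm_eq_abs, Real.norm_eq_abs]
  simp only [Pi.add_apply]
  nlinarith [sq_nonneg (|(p i).eval t| - |(p j).eval t|), sq_abs ((p i).eval t),
    sq_abs ((p j).eval t), abs_nonneg ((p i).eval t), abs_nonneg ((p j).eval t)]

lemma aux_integral (μ : Measure ℝ) [IsProbabilityMeasure μ] (p : ℕ → Polynomial ℝ)
    (horth : ∀ n m, ∫ x, (p n).eval x * (p m).eval x ∂μ = if n = m then 1 else 0)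
    (n : ℕ) (c : ℕ → ℝ) (q : Polynomial ℝ)
    (hq : q = ∑ k ∈ Finset.range (n+1), Polynomial.C (c k) * p k) :
    Integrable (fun t => q.eval t ^ 2) μ ∧
      ∫ t, q.eval t ^ 2 ∂μ = ∑ k ∈ Finset.range (n+1), (c k)^2 := by
  have hev : ∀ t, q.eval t ^ 2 = ∑ i ∈ Finset.range (n+1), ∑ j ∈ Finset.range (n+1),
      (c i * c j) * ((p i).eval t * (p j).eval t) := by
    intro t
    rw [hq, Polynomial.eval_finset_sum, sq, Finset.sum_mul_sum]
    apply Finset.sum_congr rfl; intro i _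
    apply Finset.sum_congr rfl; intro j _
    simp [Polynomial.eval_mul]
    ring
  have hint : ∀ i ∈ Finset.range (n+1), ∀ j ∈ Finset.range (n+1),
      Integrable (fun t => (c i * c j) * ((p i).eval t * (p j).eval t)) μ :=
    fun i _ j _ => (aux_int_mul μ p horth i j).const_mul _
  constructor
  · rw [funext hev]
    exact integrable_finset_sum _ (fun i hi => integrable_finset_sum _ (fun j hj => hint i hi j hj))
  · rw [funext hev, integral_finset_sum _
      (fun i hi => integrable_finset_sum _ (fun j hj => hint i hi j hj))]
    have : ∀ i ∈ Finset.range (n+1), ∫ t, (∑ j ∈ Finset.range (n+1),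
        (c i * c j) * ((p i).eval t * (p j).eval t)) ∂μ = (c i)^2 := by
      intro i hi
      rw [integral_finset_sum _ (fun j hj => hint i hi j hj)]
      have : ∀ j ∈ Finset.range (n+1), ∫ t, (c i * c j) * ((p i).eval t * (p j).eval t) ∂μ
          = if i = j then c i * c j else 0 := by
        intro j _
        rw [integral_const_mul, horth i j]
        split <;> simp
      rw [Finset.sum_congr rfl this, Finset.sum_ite_eq (Finset.range (n+1)) i (fun j => c i * c j)]
      rw [if_pos hi, sq]
    rw [Finset.sum_congr rfl this]

set_option maxHeartbeats 1000000 in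
/-- For orthonormal polynomials `p_n` of a probability measure `μ` on `ℝ` with
compact and infinite support, the mass of `μ` at a point `x` equals
`(∑ p_n(x)²)⁻¹`, interpreted as `0` when the series diverges. -/
theorem mass_point_eq_inv_sum_of_squares
    (μ : Measure ℝ) [IsProbabilityMeasure μ]
    (hcompact : ∃ K : Set ℝ, IsCompact K ∧ μ Kᶜ = 0)
    (hinfinite : ∀ S : Finset ℝ, μ ((S : Set ℝ)ᶜ) ≠ 0)
    (p : ℕ → Polynomial ℝ)
    (hdeg : ∀ n, (p n).natDegree = n)
    (hlead : ∀ n, 0 < (p n).leadingCoeff)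
    (horth : ∀ n m, ∫ x, (p n).eval x * (p m).eval x ∂μ = if n = m then 1 else 0)
    (x : ℝ) :
    (¬ Summable (fun n => (p n).eval x ^ 2) → μ {x} = 0) ∧
      (Summable (fun n => (p n).eval x ^ 2) →
        μ {x} = ENNReal.ofReal (∑' n, (p n).eval x ^ 2)⁻¹) := by
  set e : ℕ → ℝ := fun k => (p k).eval x with he
  set s : ℕ → ℝ := fun n => ∑ k ∈ Finset.range (n+1), e k ^ 2 with hs
  set m : ℝ := (μ {x}).toReal with hm
  have hm0 : 0 ≤ m := ENNReal.toReal_nonneg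
  -- p 0 is a constant with square integral 1
  have he0 : e 0 ^ 2 = 1 := by
    obtain ⟨a, hpa⟩ : ∃ a, p 0 = Polynomial.C a :=
      ⟨_, eq_C_of_natDegree_le_zero (le_of_eq (hdeg 0))⟩
    have h00 := horth 0 0
    rw [if_pos rfl] at h00
    simp only [hpa, Polynomial.eval_C, integral_const, measure_univ, ENNReal.toReal_one, probReal_univ,
      one_smul] at h00
    simp only [he, hpa, Polynomial.eval_C, sq]
    exact h00
  -- sum of squares at least 1
  have hs1 : ∀ n, 1 ≤ s n := by
    intro n
    calc (1:ℝ) = e 0 ^ 2 := he0.symm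
    _ ≤ s n := Finset.single_le_sum (fun i _ => sq_nonneg (e i))
        (Finset.mem_range.mpr (Nat.succ_pos n))
  -- Key inequality B: evaluation bound
  have keyB : ∀ (q : Polynomial ℝ) (n : ℕ), q.natDegree ≤ n →
      Integrable (fun t => q.eval t ^ 2) μ ∧
      q.eval x ^ 2 ≤ s n * ∫ t, q.eval t ^ 2 ∂μ := by
    intro q n hqn
    obtain ⟨c, hc⟩ := aux_expand p hdeg hlead n q hqn
    obtain ⟨hint, hval⟩ := aux_integral μ p horth n c q hc
    refine ⟨hint, ?_⟩
    have hx : q.eval x = ∑ k ∈ Finset.range (n+1), e k * c k := by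
      rw [hc, Polynomial.eval_finset_sum]
      apply Finset.sum_congr rfl
      intro k _; simp [he, mul_comm]
    rw [hx, hval, hs]
    exact Finset.sum_mul_sq_le_sq_mul_sq _ _ _
  -- Key inequality C: m * s n ≤ 1
  have keyC : ∀ n, m * s n ≤ 1 := by
    intro n
    set q : Polynomial ℝ := ∑ k ∈ Finset.range (n+1), Polynomial.C (e k) * p k with hqdef
    obtain ⟨hint, hval⟩ := aux_integral μ p horth n e q rfl
    have hqx : q.eval x = s n := by
      rw [hqdef, Polynomial.eval_finset_sum]
      apply Finset.sum_congr rfl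
      intro k _; simp [he, sq]
    have hset : ∫ t in {x}, q.eval t ^ 2 ∂μ = m * s n ^ 2 := by
      rw [integral_singleton, hqx, smul_eq_mul, hm]; rfl
    have hle : ∫ t in {x}, q.eval t ^ 2 ∂μ ≤ ∫ t, q.eval t ^ 2 ∂μ :=
      setIntegral_le_integral hint (Filter.Eventually.of_forall fun t => sq_nonneg _)
    rw [hset, hval] at hle
    have hsn : (0:ℝ) < s n := lt_of_lt_of_le one_pos (hs1 n)
    have : m * s n * s n ≤ 1 * s n := by
      rw [one_mul]
      calc m * s n * s n = m * s n ^ 2 := by ring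
      _ ≤ ∑ k ∈ Finset.range (n+1), e k ^ 2 := hle
      _ = s n := rfl
    exact le_of_mul_le_mul_right this hsn
  constructor
  · -- divergent case
    intro hns
    have hT : Filter.Tendsto (fun n => ∑ i ∈ Finset.range n, e i ^ 2)
        Filter.atTop Filter.atTop := by
      by_contra hT
      exact hns ((summable_iff_not_tendsto_nat_atTop_of_nonneg
        (fun n => sq_nonneg (e n))).mpr hT)
    have hT' : Filter.Tendsto s Filter.atTop Filter.atTop :=
      hT.comp (Filter.tendsto_add_atTop_nat 1)
    by_contra hne
    have hmp : 0 < m := by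
      rw [hm]
      exact ENNReal.toReal_pos hne (measure_ne_top μ _)
    obtain ⟨n, hn⟩ := (hT'.eventually_gt_atTop (1/m)).exists
    have := keyC n
    rw [div_lt_iff₀ hmp] at hn
    nlinarith
  · -- summable case
    intro hsum
    set S : ℝ := ∑' n, e n ^ 2 with hS
    have hsle : ∀ n, s n ≤ S := fun n =>
      Summable.sum_le_tsum (Finset.range (n+1)) (fun i _ => sq_nonneg (e i)) hsum
    have hS1 : 1 ≤ S := le_trans (le_of_eq he0.symm) (Summable.le_tsum hsum 0 fun i _ => sq_nonneg (e i))
    have hSpos : (0:ℝ) < S := lt_of_lt_of_le one_pos hS1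
    -- upper bound: m * S ≤ 1
    have hub : m * S ≤ 1 := by
      have hconv : Filter.Tendsto s Filter.atTop (nhds S) :=
        hsum.hasSum.tendsto_sum_nat.comp (Filter.tendsto_add_atTop_nat 1)
      exact le_of_tendsto (Filter.Tendsto.const_mul m hconv)
        (Filter.Eventually.of_forall keyC)
    -- lower bound: 1 ≤ m * S
    have hlb : 1 ≤ m * S := by
      refine le_of_forall_pos_le_add (fun η hη => ?_)
      set ε := min 1 (η / (4*S + 2)) with hε
      have hεpos : 0 < ε := lt_min one_pos (div_pos hη (by linarith))
      have hε1 : ε ≤ 1 := min_le_left _ _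
      have hεη : (4*S+2) * ε ≤ η := by
        calc (4*S+2) * ε ≤ (4*S+2) * (η/(4*S+2)) :=
              mul_le_mul_of_nonneg_left (min_le_right _ _) (by linarith)
        _ = η := mul_div_cancel₀ _ (by linarith)
      -- compact set inside an interval
      obtain ⟨K, hK, hKc⟩ := hcompact
      obtain ⟨R, hR⟩ := hK.isBounded.subset_closedBall 0
      set A := min (-R) (x-1) with hA
      set B := max R (x+1) with hB
      have hKI : K ⊆ Set.Icc A B := by
        intro t ht
        have h1 := hR ht
        rw [Real.closedBall_eq_Icc] at h1
        exact ⟨le_trans (min_le_left _ _) (by simpa using h1.1),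
          le_trans (by simpa using h1.2) (le_max_left _ _)⟩
      have hxI : x ∈ Set.Icc A B :=
        ⟨le_trans (min_le_right _ _) (by linarith), le_trans (by linarith) (le_max_right _ _)⟩
      -- choose δ with measure of closed ball close to μ {x}
      have hth := tendsto_measure_cthickening_of_isClosed
        (μ := μ) (s := {x}) ⟨1, one_pos, measure_ne_top μ _⟩ isClosed_singleton
      have hlt : μ {x} < μ {x} + ENNReal.ofReal ε :=
        ENNReal.lt_add_right (measure_ne_top μ _)
          (by simp [ENNReal.ofReal_eq_zero, not_le, hεpos])
      have hev := hth.eventually (gt_mem_nhds hlt)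
      obtain ⟨δ, hδpos, hδ⟩ : ∃ δ > 0, μ (Metric.closedBall x δ) < μ {x} + ENNReal.ofReal ε := by
        rw [Metric.eventually_nhds_iff] at hev
        obtain ⟨δ', hδ', h⟩ := hev
        refine ⟨δ'/2, by linarith, ?_⟩
        have h2 := h (y := δ'/2)
          (by rw [Real.dist_eq, sub_zero, abs_of_pos (by linarith)]; linarith)
        rwa [Metric.cthickening_singleton _ (by linarith)] at h2
      have hmcb : (μ (Metric.closedBall x δ)).toReal ≤ m + ε := by
        have h3 : (μ (Metric.closedBall x δ)).toReal ≤ (μ {x} + ENNReal.ofReal ε).toReal :=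
          ENNReal.toReal_mono (by finiteness) hδ.le
        rwa [ENNReal.toReal_add (measure_ne_top μ _) ENNReal.ofReal_ne_top,
          ENNReal.toReal_ofReal hεpos.le, ← hm] at h3
      -- bump function
      set f : ℝ → ℝ := fun t => max 0 (1 - |t - x| / δ) with hf
      have hfc : ContinuousOn f (Set.Icc A B) :=
        (continuous_const.max (continuous_const.sub
          (((continuous_id.sub continuous_const).abs).div_const δ))).continuousOn
      have hf0 : ∀ t, 0 ≤ f t := fun t => le_max_left _ _
      have hf1 : ∀ t, f t ≤ 1 := fun t => max_le one_pos.le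
        (by have : 0 ≤ |t - x| / δ := div_nonneg (abs_nonneg _) hδpos.le; linarith)
      have hfx : f x = 1 := by simp [hf]
      have hfind : ∀ t, f t ^ 2 ≤ Set.indicator (Metric.closedBall x δ) (fun _ => (1:ℝ)) t := by
        intro t
        by_cases ht : t ∈ Metric.closedBall x δ
        · rw [Set.indicator_of_mem ht]
          nlinarith [hf1 t, hf0 t]
        · rw [Set.indicator_of_notMem ht]
          have hd : δ < |t - x| := by
            rw [Metric.mem_closedBall, Real.dist_eq, not_le] at ht
            exact ht
          have hft : f t = 0 := max_eq_left (by
            rw [sub_nonpos, le_div_iff₀ hδpos]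
            linarith)
          rw [hft]; norm_num
      -- Weierstrass approximation
      obtain ⟨q, hq⟩ := exists_polynomial_near_of_continuousOn A B f hfc ε hεpos
      have hqx : 1 - ε ≤ q.eval x := by
        have h4 := hq x hxI
        rw [hfx] at h4
        have := abs_lt.mp h4
        linarith [this.1]
      obtain ⟨hint, hkey⟩ := keyB q q.natDegree le_rfl
      -- integral bound for q²
      have hibound : (∫ t, q.eval t ^ 2 ∂μ) ≤ m + 4*ε := by
        have hindint : Integrable
            (fun t => Set.indicator (Metric.closedBall x δ) (fun _ => (1:ℝ)) t) μ :=
          (integrable_const 1).indicator Metric.isClosed_closedBall.measurableSet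
        have hgint : Integrable
            (fun t => Set.indicator (Metric.closedBall x δ) (fun _ => (1:ℝ)) t + 3*ε) μ :=
          hindint.add (integrable_const _)
        have hK' : ∀ᵐ t ∂μ, t ∈ K := by
          rw [ae_iff]
          exact hKc
        have hae : ∀ᵐ t ∂μ, q.eval t ^ 2 ≤
            Set.indicator (Metric.closedBall x δ) (fun _ => (1:ℝ)) t + 3*ε := by
          filter_upwards [hK'] with t ht
          have h1 := abs_lt.mp (hq t (hKI ht))
          have h2 : q.eval t ^ 2 ≤ (f t + ε) ^ 2 := by
            nlinarith [hf0 t, h1.1, h1.2]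
          calc q.eval t ^ 2 ≤ (f t + ε) ^ 2 := h2
          _ ≤ f t ^ 2 + 3*ε := by nlinarith [hf1 t, hf0 t]
          _ ≤ _ := by linarith [hfind t]
        calc (∫ t, q.eval t ^ 2 ∂μ)
            ≤ ∫ t, (Set.indicator (Metric.closedBall x δ) (fun _ => (1:ℝ)) t + 3*ε) ∂μ :=
              integral_mono_ae hint hgint hae
        _ = (μ (Metric.closedBall x δ)).toReal + 3*ε := by
              rw [integral_add hindint (integrable_const _),
                integral_indicator_const (1:ℝ) Metric.isClosed_closedBall.measurableSet,
                integral_const]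
              simp [measure_univ, measureReal_def]
        _ ≤ m + ε + 3*ε := by linarith
        _ = m + 4*ε := by ring
      -- combine
      have h5 : (1-ε)^2 ≤ q.eval x ^ 2 := by nlinarith
      have h6 : s q.natDegree * (∫ t, q.eval t ^ 2 ∂μ) ≤ S * (m + 4*ε) :=
        mul_le_mul (hsle _) hibound (integral_nonneg fun t => sq_nonneg _) (by linarith)
      have h7 : (1-ε)^2 ≤ S * (m + 4*ε) := le_trans (le_trans h5 hkey) h6
      nlinarith [sq_nonneg ε]
    have hmS : m = S⁻¹ := by
      field_simp
      linarith
    rw [hm] at hmS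
    rw [← ENNReal.ofReal_toReal (measure_ne_top μ {x}), hmS]
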